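/- Let $k \geq n \geq 1$ be integers and $\underline{\xi} = (\xi_1, \xi_2, \ldots)$ an infinite sequence of reals such that $\{1, \xi_1, \ldots, \xi_k\}$ is linearly independent over $\mathbb{Q}$. If $\lambda_n(\underline{\xi}_n) > \frac{k-n+1}{n}$, then $\lambda_k(\underline{\xi}_k) \geq \frac{n\lambda_n(\underline{\xi}_n) + n - 1}{n(k-1)(\lambda_n(\underline{\xi}_n) + 1) + 1} > \frac{1}{k}$, where $\underline{\xi}_N = (\xi_1, \ldots, \xi_N)$. -/

import Mathlib

/-- `(x, y)` is a solution of the simultaneous approximation system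
`1 ≤ |x| ≤ X`, `|ζ_j x - y_j| ≤ X^{-l}` for a general vector `ζ ∈ ℝ^N`. -/
def goodSimulVec (N : ℕ) (ζ : Fin N → ℝ) (l X : ℝ) : Prop :=
  ∃ x : ℤ, ∃ y : Fin N → ℤ, 1 ≤ |x| ∧ (|x| : ℝ) ≤ X ∧
    ∀ j : Fin N, |ζ j * (x : ℝ) - (y j : ℝ)| ≤ X ^ (-l)

/-- The ordinary exponent `λ_N(ζ)` of simultaneous rational approximation. -/
noncomputable def lambdaVec (N : ℕ) (ζ : Fin N → ℝ) : EReal :=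
  sSup {e : EReal | ∃ l : ℝ, e = (l : EReal) ∧ ∀ X₀ : ℝ, ∃ X ≥ X₀, goodSimulVec N ζ l X}

/-- The uniform exponent `λ̂_N(ζ)` of simultaneous rational approximation. -/
noncomputable def lambdaHatVec (N : ℕ) (ζ : Fin N → ℝ) : EReal :=
  sSup {e : EReal | ∃ l : ℝ, e = (l : EReal) ∧ ∃ X₁ : ℝ, ∀ X ≥ X₁, goodSimulVec N ζ l X}

/-- Theorem 4.2: going-up for the ordinary exponent of a
`ℚ`-linearly independent vector. Here `ξ j` denotes `ξ_{j+1}`. -/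

lemma lin_nonzero (k : ℕ) (ξ : ℕ → ℝ)
    (hli : LinearIndependent ℚ
      (Fin.cons 1 (fun j : Fin k => ξ (j : ℕ)) : Fin (k + 1) → ℝ))
    (a : ℤ) (b : Fin k → ℤ) (hb : b ≠ 0) :
    (a : ℝ) + ∑ j : Fin k, (b j : ℝ) * ξ (j : ℕ) ≠ 0 := by
  intro h0
  rw [Fintype.linearIndependent_iff] at hli
  set g : Fin (k + 1) → ℚ := Fin.cons (a : ℚ) (fun j => (b j : ℚ)) with hg
  have hsum : ∑ i : Fin (k + 1),
      g i • (Fin.cons 1 (fun j : Fin k => ξ (j : ℕ)) : Fin (k + 1) → ℝ) i = 0 := by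
    have : ∀ i : Fin (k + 1), g i • (Fin.cons 1 (fun j : Fin k => ξ (j : ℕ)) : Fin (k + 1) → ℝ) i
        = (Fin.cons (a : ℝ) (fun j : Fin k => (b j : ℝ) * ξ (j : ℕ)) : Fin (k + 1) → ℝ) i := by
      intro i
      induction i using Fin.cases with
      | zero => simp [hg, Rat.smul_def]
      | succ j => simp [hg, Rat.smul_def]
    rw [Finset.sum_congr rfl (fun i _ => this i), Fin.sum_cons]
    exact h0
  have hz := hli g hsum
  apply hb
  funext j
  have := hz j.succ
  simp [hg] at this
  exact_mod_cast this

lemma exists_pos_lb (k : ℕ) (ξ : ℕ → ℝ)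
    (hli : LinearIndependent ℚ
      (Fin.cons 1 (fun j : Fin k => ξ (j : ℕ)) : Fin (k + 1) → ℝ))
    (A B : ℝ) :
    ∃ δ > 0, ∀ (a : ℤ) (b : Fin k → ℤ), b ≠ 0 → (∀ j, (|b j| : ℝ) ≤ B) →
      (|a| : ℝ) ≤ A → δ ≤ |(a : ℝ) + ∑ j : Fin k, (b j : ℝ) * ξ (j : ℕ)| := by
  classical
  set N : ℕ := ⌈max A B⌉₊ with hN
  set S : Finset (ℤ × (Fin k → ℤ)) :=
    (Finset.Icc (-(N : ℤ)) N ×ˢ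
      Fintype.piFinset fun _ : Fin k => Finset.Icc (-(N : ℤ)) N).filter
      (fun p => p.2 ≠ 0) with hS
  have hmem : ∀ (a : ℤ) (b : Fin k → ℤ), b ≠ 0 → (∀ j, (|b j| : ℝ) ≤ B) →
      (|a| : ℝ) ≤ A → (a, b) ∈ S := by
    intro a b hb hbB haA
    have hAN : A ≤ (N : ℝ) := le_trans (le_max_left _ _) (Nat.le_ceil _)
    have hBN : B ≤ (N : ℝ) := le_trans (le_max_right _ _) (Nat.le_ceil _)
    simp only [hS, Finset.mem_filter, Finset.mem_product, Fintype.mem_piFinset,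
      Finset.mem_Icc]
    refine ⟨⟨?_, fun j => ?_⟩, hb⟩
    · have : (|a| : ℝ) ≤ (N : ℝ) := le_trans haA hAN
      have : |a| ≤ (N : ℤ) := by exact_mod_cast this
      exact abs_le.1 this
    · have : (|b j| : ℝ) ≤ (N : ℝ) := le_trans (hbB j) hBN
      have : |b j| ≤ (N : ℤ) := by exact_mod_cast this
      exact abs_le.1 this
  by_cases hne : S.Nonempty
  · obtain ⟨p, hp, hpmin⟩ := S.exists_min_image
      (fun p => |(p.1 : ℝ) + ∑ j : Fin k, (p.2 j : ℝ) * ξ (j : ℕ)|) hne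
    refine ⟨_, ?_, fun a b hb hbB haA => hpmin _ (hmem a b hb hbB haA)⟩
    have : p.2 ≠ 0 := (Finset.mem_filter.1 hp).2
    exact abs_pos.2 (lin_nonzero k ξ hli p.1 p.2 this)
  · exact ⟨1, one_pos, fun a b hb hbB haA => absurd ⟨_, hmem a b hb hbB haA⟩ hne⟩


lemma stepA (n k : ℕ) (hn : 1 ≤ n) (hnk : n ≤ k) (ξ : ℕ → ℝ)
    (x : ℤ) (hx1 : 1 ≤ |x|) (y : Fin n → ℤ) (ε : ℝ)
    (herr : ∀ j : Fin n, |ξ (j : ℕ) * (x : ℝ) - (y j : ℝ)| ≤ ε) :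
    ∃ (H : ℕ) (a : ℤ) (b : Fin k → ℤ), b ≠ 0 ∧
      (∀ j, |b j| ≤ (H : ℤ)) ∧ 1 ≤ H ∧ ((H : ℝ)) ≤ 2 * (|x| : ℝ) ^ (n : ℝ)⁻¹ ∧
      |(a : ℝ) + ∑ j : Fin k, (b j : ℝ) * ξ (j : ℕ)| * (|x| : ℝ)
        ≤ (n : ℝ) * H * ε := by
  classical
  have hx0 : x ≠ 0 := by intro h; simp [h] at hx1
  have hxR : (1 : ℝ) ≤ ((|x| : ℤ) : ℝ) := by exact_mod_cast hx1
  have hxR0 : (0 : ℝ) ≤ ((|x| : ℤ) : ℝ) := by linarith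
  set H : ℕ := ⌈((|x| : ℤ) : ℝ) ^ (n : ℝ)⁻¹⌉₊ with hH
  have hrp1 : (1 : ℝ) ≤ ((|x| : ℤ) : ℝ) ^ (n : ℝ)⁻¹ :=
    Real.one_le_rpow hxR (by positivity)
  have hH1 : 1 ≤ H := Nat.one_le_ceil_iff.2 (by linarith)
  have hHge : ((|x| : ℤ) : ℝ) ^ (n : ℝ)⁻¹ ≤ (H : ℝ) := Nat.le_ceil _
  have hHle : (H : ℝ) ≤ 2 * ((|x| : ℤ) : ℝ) ^ (n : ℝ)⁻¹ := by
    have := Nat.ceil_lt_add_one (R := ℝ)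
      (a := ((|x| : ℤ) : ℝ) ^ (n : ℝ)⁻¹) (by positivity)
    rw [← hH] at this
    linarith
  -- pigeonhole
  set D : Finset (Fin n → ℤ) :=
    Fintype.piFinset fun _ : Fin n => Finset.Icc (0 : ℤ) H with hD
  set R : Finset ℤ := Finset.Ico (0 : ℤ) |x| with hR
  have hcardD : D.card = (H + 1) ^ n := by
    rw [hD, Fintype.card_piFinset]
    simp [Int.card_Icc]
  have hcardR : R.card = (|x|).toNat := by simp [hR, Int.card_Ico]
  have hxpow : ((|x| : ℤ) : ℝ) ≤ (H : ℝ) ^ n := by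
    calc ((|x| : ℤ) : ℝ) = (((|x| : ℤ) : ℝ) ^ (n : ℝ)⁻¹) ^ n := by
          rw [← Real.rpow_natCast (((|x| : ℤ) : ℝ) ^ (n : ℝ)⁻¹) n,
            ← Real.rpow_mul hxR0, inv_mul_cancel₀ (by positivity), Real.rpow_one]
      _ ≤ (H : ℝ) ^ n := by
          exact pow_le_pow_left₀ (by positivity) hHge n
  have hcard : R.card < D.card := by
    rw [hcardD, hcardR]
    have h1 : (|x|).toNat ≤ H ^ n := by
      have h0 : ((|x| : ℤ) : ℝ) ≤ ((H ^ n : ℕ) : ℝ) := by rw [Nat.cast_pow]; exact hxpow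
      have h2 : |x| ≤ ((H ^ n : ℕ) : ℤ) := by exact_mod_cast h0
      omega
    have h2 : H ^ n < (H + 1) ^ n := Nat.pow_lt_pow_left (by omega) (by omega)
    omega
  have hmaps : ∀ t ∈ D, (∑ j : Fin n, t j * y j) % |x| ∈ R := by
    intro t _
    rw [hR, Finset.mem_Ico]
    exact ⟨Int.emod_nonneg _ (by simpa using hx0), Int.emod_lt_of_pos _ (by omega)⟩
  obtain ⟨t', ht', t'', ht'', htne, hfeq⟩ :=
    Finset.exists_ne_map_eq_of_card_lt_of_maps_to hcard hmaps
  set d : Fin n → ℤ := fun j => t' j - t'' j with hd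
  have hdvd : x ∣ ∑ j : Fin n, d j * y j := by
    rw [← abs_dvd]
    have := Int.emod_eq_emod_iff_emod_sub_eq_zero.1 hfeq
    have := Int.dvd_of_emod_eq_zero this
    simpa [hd, Finset.sum_sub_distrib, sub_mul] using this
  set S : ℤ := ∑ j : Fin n, d j * y j with hSdef
  set a : ℤ := -(S / x) with ha
  have hax : a * x = -S := by
    rw [ha, neg_mul, Int.ediv_mul_cancel hdvd]
  have hdabs : ∀ j, |d j| ≤ (H : ℤ) := by
    intro j
    have h1 := ht' ; have h2 := ht''
    rw [hD, Fintype.mem_piFinset] at h1 h2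
    have h3 := h1 j; have h4 := h2 j
    rw [Finset.mem_Icc] at h3 h4
    simp only [hd]
    rw [abs_le]
    omega
  set b : Fin k → ℤ := fun j => if h : (j : ℕ) < n then d ⟨j, h⟩ else 0 with hb
  have hbne : b ≠ 0 := by
    have : ∃ j₀ : Fin n, d j₀ ≠ 0 := by
      by_contra hno
      push_neg at hno
      exact htne (funext fun j => by have := hno j; simp [hd] at this; omega)
    obtain ⟨j₀, hj₀⟩ := this
    intro hb0
    have : b ⟨(j₀ : ℕ), lt_of_lt_of_le j₀.isLt hnk⟩ = 0 := by rw [hb0]; rfl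
    rw [hb] at this
    simp only [dif_pos j₀.isLt] at this
    exact hj₀ (by simpa using this)
  have hbabs : ∀ j, |b j| ≤ (H : ℤ) := by
    intro j
    simp only [hb]
    split_ifs with h
    · exact hdabs _
    · simp
  -- sum reduction
  set F : ℕ → ℝ := fun i => if h : i < n then (d ⟨i, h⟩ : ℝ) * ξ i else 0 with hF
  have hsum : ∑ j : Fin k, (b j : ℝ) * ξ (j : ℕ) = ∑ j : Fin n, (d j : ℝ) * ξ (j : ℕ) := by
    have e1 : ∑ j : Fin k, (b j : ℝ) * ξ (j : ℕ) = ∑ j : Fin k, F (j : ℕ) := by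
      apply Finset.sum_congr rfl
      intro j _
      simp only [hb, hF]
      split_ifs with h <;> simp
    have e2 : ∑ j : Fin n, (d j : ℝ) * ξ (j : ℕ) = ∑ j : Fin n, F (j : ℕ) := by
      apply Finset.sum_congr rfl
      intro j _
      rw [hF]
      simp only [dif_pos j.isLt]
    rw [e1, e2, Fin.sum_univ_eq_sum_range (fun i => F i) k,
      Fin.sum_univ_eq_sum_range (fun i => F i) n]
    symm
    apply Finset.sum_subset (Finset.range_subset_range.2 hnk)
    intro i _ hi
    rw [Finset.mem_range] at hi
    rw [hF]
    simp [dif_neg hi]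
  have hxcast : |(x : ℝ)| = ((|x| : ℤ) : ℝ) := by push_cast; rfl
  rw [hxcast]
  refine ⟨H, a, b, hbne, hbabs, hH1, hHle, ?_⟩
  have hε : 0 ≤ ε := le_trans (abs_nonneg _) (herr ⟨0, hn⟩)
  have hxabs : |(x : ℝ)| = ((|x| : ℤ) : ℝ) := by push_cast; rfl
  have hS : (S : ℝ) = ∑ j : Fin n, (d j : ℝ) * (y j : ℝ) := by
    rw [hSdef]; push_cast; rfl
  have haxR : (a : ℝ) * x = -(S : ℝ) := by exact_mod_cast congrArg (Int.cast : ℤ → ℝ) hax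
  have key : ((a : ℝ) + ∑ j : Fin k, (b j : ℝ) * ξ (j : ℕ)) * x
      = ∑ j : Fin n, (d j : ℝ) * (ξ (j : ℕ) * x - y j) := by
    have e3 : ∑ j : Fin n, (d j : ℝ) * (ξ (j : ℕ) * x - y j)
        = (∑ j : Fin n, (d j : ℝ) * ξ (j : ℕ) * x) - (S : ℝ) := by
      rw [hS, ← Finset.sum_sub_distrib]
      apply Finset.sum_congr rfl
      intro j _
      ring
    rw [e3, hsum, add_mul, Finset.sum_mul, haxR]
    ring
  have habs : |(a : ℝ) + ∑ j : Fin k, (b j : ℝ) * ξ (j : ℕ)| * ((|x| : ℤ) : ℝ)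
      = |∑ j : Fin n, (d j : ℝ) * (ξ (j : ℕ) * x - y j)| := by
    rw [← hxabs, ← abs_mul, key]
  rw [habs]
  calc |∑ j : Fin n, (d j : ℝ) * (ξ (j : ℕ) * x - y j)|
      ≤ ∑ j : Fin n, |(d j : ℝ) * (ξ (j : ℕ) * x - y j)| :=
        Finset.abs_sum_le_sum_abs _ _
    _ ≤ ∑ _j : Fin n, (H : ℝ) * ε := by
        apply Finset.sum_le_sum
        intro j _
        rw [abs_mul]
        apply mul_le_mul _ (herr j) (abs_nonneg _) (by positivity)
        have := hdabs j
        calc |(d j : ℝ)| = ((|d j| : ℤ) : ℝ) := by push_cast; rfl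
          _ ≤ (H : ℝ) := by exact_mod_cast this
    _ = (n : ℝ) * H * ε := by
        rw [Finset.sum_const, Finset.card_univ, Fintype.card_fin]
        push_cast; ring


lemma stepB (k : ℕ) (hk : 1 ≤ k) (ξ : ℕ → ℝ) (a : ℤ) (b : Fin k → ℤ)
    (m : Fin k) (hm : ∀ j, |b j| ≤ |b m|) (hbm : b m ≠ 0) (Q : ℕ) (hQ : 1 ≤ Q) :
    ∃ (x : ℤ) (y : Fin k → ℤ), 1 ≤ x ∧ x ≤ (Q : ℤ) ^ (k - 1) * |b m| ∧
      ∀ j : Fin k, |ξ (j : ℕ) * (x : ℝ) - (y j : ℝ)| ≤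
        ((Q : ℝ) ^ (k - 1)) * |(a : ℝ) + ∑ j' : Fin k, (b j' : ℝ) * ξ (j' : ℕ)|
          + (k : ℝ) / Q := by
  classical
  set U : ℕ := (b m).natAbs with hU
  have hU1 : 1 ≤ U := by
    rw [hU, Nat.one_le_iff_ne_zero, Int.natAbs_ne_zero]
    exact hbm
  have hUZ : (0 : ℤ) < (U : ℤ) := by exact_mod_cast hU1
  have hUabs : ((U : ℤ)) = |b m| := by rw [hU, Int.abs_eq_natAbs]
  set M : ℕ := Q ^ (k - 1) * U with hM
  set ρ : ℕ → ℤ := fun z =>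
    a * z + ∑ j' ∈ Finset.univ.erase m, b j' * ⌊ξ (j' : ℕ) * (z : ℝ)⌋ with hρ
  set g : ℕ → (Fin k → ℤ) := fun z => fun j =>
    if j = m then (ρ z) % (U : ℤ)
    else ⌊(Q : ℝ) * Int.fract (ξ (j : ℕ) * (z : ℝ))⌋ with hg
  set T : Finset (Fin k → ℤ) :=
    Fintype.piFinset fun j : Fin k =>
      if j = m then Finset.Ico (0 : ℤ) (U : ℤ) else Finset.Ico (0 : ℤ) (Q : ℤ) with hT
  have hcardT : T.card = M := by
    rw [hT, Fintype.card_piFinset]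
    have h1 : ∀ j : Fin k,
        ((if j = m then Finset.Ico (0 : ℤ) (U : ℤ) else Finset.Ico (0 : ℤ) (Q : ℤ)).card)
        = if j = m then U else Q := by
      intro j
      split_ifs <;> simp [Int.card_Ico]
    rw [Finset.prod_congr rfl (fun j _ => h1 j)]
    rw [← Finset.mul_prod_erase Finset.univ _ (Finset.mem_univ m)]
    rw [if_pos rfl]
    have h2 : ∏ j ∈ Finset.univ.erase m, (if j = m then U else Q) = Q ^ (k - 1) := by
      rw [Finset.prod_congr rfl (fun j hj => if_neg (Finset.ne_of_mem_erase hj))]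
      rw [Finset.prod_const, Finset.card_erase_of_mem (Finset.mem_univ m)]
      simp
    rw [h2, hM, mul_comm]
  have hmaps : ∀ z ∈ Finset.range (M + 1), g z ∈ T := by
    intro z _
    rw [hT, Fintype.mem_piFinset]
    intro j
    simp only [hg]
    split_ifs with h
    · rw [Finset.mem_Ico]
      exact ⟨Int.emod_nonneg _ hUZ.ne', Int.emod_lt_of_pos _ hUZ⟩
    · rw [Finset.mem_Ico]
      constructor
      · exact Int.floor_nonneg.2 (mul_nonneg (by positivity) (Int.fract_nonneg _))
      · apply Int.floor_lt.2
        push_cast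
        have h1 : Int.fract (ξ (j : ℕ) * (z : ℝ)) < 1 := Int.fract_lt_one _
        nlinarith [Int.fract_nonneg (ξ (j : ℕ) * (z : ℝ)),
          (by positivity : (0:ℝ) < (Q:ℝ))]
  have hcard : T.card < (Finset.range (M + 1)).card := by
    rw [hcardT, Finset.card_range]; omega
  obtain ⟨z₁, hz₁, z₂, hz₂, hzne, hgeq⟩ :=
    Finset.exists_ne_map_eq_of_card_lt_of_maps_to hcard hmaps
  obtain ⟨w₁, w₂, hw, hwm, hkeq⟩ :
      ∃ w₁ w₂ : ℕ, w₂ < w₁ ∧ w₁ ∈ Finset.range (M + 1) ∧ g w₁ = g w₂ := by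
    rcases Nat.lt_or_ge z₂ z₁ with hlt | hge
    · exact ⟨z₁, z₂, hlt, hz₁, hgeq⟩
    · exact ⟨z₂, z₁, by omega, hz₂, hgeq.symm⟩
  set x : ℤ := (w₁ : ℤ) - (w₂ : ℤ) with hx
  have hx1 : 1 ≤ x := by rw [hx]; omega
  have hxM : x ≤ (Q : ℤ) ^ (k - 1) * |b m| := by
    have h1 : w₁ ≤ M := by rw [Finset.mem_range] at hwm; omega
    have h2 : ((w₁ : ℤ)) ≤ (M : ℤ) := by exact_mod_cast h1
    rw [hM] at h2
    push_cast at h2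
    rw [hx, ← hUabs]
    omega
  have hdvdU : (U : ℤ) ∣ (ρ w₁ - ρ w₂) := by
    have h1 : g w₁ m = g w₂ m := by rw [hkeq]
    simp only [hg, if_pos rfl] at h1
    exact Int.dvd_of_emod_eq_zero (Int.emod_eq_emod_iff_emod_sub_eq_zero.1 h1)
  set s : ℤ := a * x + ∑ j' ∈ Finset.univ.erase m,
      b j' * (⌊ξ (j' : ℕ) * (w₁ : ℝ)⌋ - ⌊ξ (j' : ℕ) * (w₂ : ℝ)⌋) with hs
  have hseq : s = ρ w₁ - ρ w₂ := by
    have e : ∑ j' ∈ Finset.univ.erase m,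
        b j' * (⌊ξ (j' : ℕ) * (w₁ : ℝ)⌋ - ⌊ξ (j' : ℕ) * (w₂ : ℝ)⌋)
        = (∑ j' ∈ Finset.univ.erase m, b j' * ⌊ξ (j' : ℕ) * (w₁ : ℝ)⌋)
          - ∑ j' ∈ Finset.univ.erase m, b j' * ⌊ξ (j' : ℕ) * (w₂ : ℝ)⌋ := by
      rw [← Finset.sum_sub_distrib]
      exact Finset.sum_congr rfl fun j _ => mul_sub _ _ _
    rw [hs, e, hx, hρ]
    ring
  have hdvd : b m ∣ s := by
    rw [← abs_dvd, ← hUabs]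
    rw [hseq]
    exact hdvdU
  set y : Fin k → ℤ := fun j =>
    if j = m then -(s / b m) else ⌊ξ (j : ℕ) * (w₁ : ℝ)⌋ - ⌊ξ (j : ℕ) * (w₂ : ℝ)⌋ with hy
  have hym : (b m) * y m = -s := by
    simp only [hy, if_pos rfl]
    rw [mul_neg, Int.mul_ediv_cancel' hdvd]
  -- error bound for j ≠ m
  have herr : ∀ j : Fin k, j ≠ m →
      |ξ (j : ℕ) * (x : ℝ) - (y j : ℝ)| ≤ 1 / (Q : ℝ) := by
    intro j hj
    have h1 : g w₁ j = g w₂ j := by rw [hkeq]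
    simp only [hg, if_neg hj] at h1
    have h2 : |(Q : ℝ) * Int.fract (ξ (j : ℕ) * (w₁ : ℝ))
        - (Q : ℝ) * Int.fract (ξ (j : ℕ) * (w₂ : ℝ))| < 1 :=
      Int.abs_sub_lt_one_of_floor_eq_floor h1
    have hQpos : (0 : ℝ) < (Q : ℝ) := by exact_mod_cast hQ
    have h3 : |Int.fract (ξ (j : ℕ) * (w₁ : ℝ)) - Int.fract (ξ (j : ℕ) * (w₂ : ℝ))|
        < 1 / (Q : ℝ) := by
      rw [← mul_sub, abs_mul, abs_of_pos hQpos] at h2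
      rw [lt_div_iff₀ hQpos]
      linarith [h2]
    have h4 : ξ (j : ℕ) * (x : ℝ) - (y j : ℝ)
        = Int.fract (ξ (j : ℕ) * (w₁ : ℝ)) - Int.fract (ξ (j : ℕ) * (w₂ : ℝ)) := by
      simp only [hy, if_neg hj]
      rw [Int.fract, Int.fract, hx]
      push_cast
      ring
    rw [h4]
    exact le_of_lt h3
  refine ⟨x, y, hx1, hxM, ?_⟩
  set L : ℝ := (a : ℝ) + ∑ j' : Fin k, (b j' : ℝ) * ξ (j' : ℕ) with hL
  have hQpos : (0 : ℝ) < (Q : ℝ) := by exact_mod_cast hQ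
  have hbmR : (0 : ℝ) < |(b m : ℝ)| := by
    rw [abs_pos]
    exact_mod_cast hbm
  -- key identity for coordinate m
  have hkey : (b m : ℝ) * (ξ (m : ℕ) * (x : ℝ) - (y m : ℝ))
      = (x : ℝ) * L - ∑ j' ∈ Finset.univ.erase m,
          (b j' : ℝ) * (ξ (j' : ℕ) * (x : ℝ) - (y j' : ℝ)) := by
    have hymR : (b m : ℝ) * (y m : ℝ) = -(s : ℝ) := by exact_mod_cast congrArg (Int.cast : ℤ → ℝ) hym
    have hsR : (s : ℝ) = (a : ℝ) * (x : ℝ) + ∑ j' ∈ Finset.univ.erase m,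
        (b j' : ℝ) * ((⌊ξ (j' : ℕ) * (w₁ : ℝ)⌋ : ℝ) - (⌊ξ (j' : ℕ) * (w₂ : ℝ)⌋ : ℝ)) := by
      rw [hs]; push_cast; ring
    have hyj : ∀ j' ∈ Finset.univ.erase m,
        (y j' : ℝ) = (⌊ξ (j' : ℕ) * (w₁ : ℝ)⌋ : ℝ) - (⌊ξ (j' : ℕ) * (w₂ : ℝ)⌋ : ℝ) := by
      intro j' hj'
      simp only [hy, if_neg (Finset.ne_of_mem_erase hj')]
      push_cast
      ring
    have hsplit : L = (b m : ℝ) * ξ (m : ℕ)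
        + ∑ j' ∈ Finset.univ.erase m, (b j' : ℝ) * ξ (j' : ℕ) - (- (a:ℝ)) := by
      rw [hL, ← Finset.add_sum_erase Finset.univ _ (Finset.mem_univ m)]
      ring
    rw [hsplit]
    rw [Finset.sum_congr rfl (fun j' hj' => by rw [hyj j' hj'] :
      ∀ j' ∈ Finset.univ.erase m, (b j' : ℝ) * (ξ (j' : ℕ) * (x : ℝ) - (y j' : ℝ))
        = (b j' : ℝ) * (ξ (j' : ℕ) * (x : ℝ)
            - ((⌊ξ (j' : ℕ) * (w₁ : ℝ)⌋ : ℝ) - (⌊ξ (j' : ℕ) * (w₂ : ℝ)⌋ : ℝ))))]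
    have hexp : ∑ j' ∈ Finset.univ.erase m, (b j' : ℝ) * (ξ (j' : ℕ) * (x : ℝ)
            - ((⌊ξ (j' : ℕ) * (w₁ : ℝ)⌋ : ℝ) - (⌊ξ (j' : ℕ) * (w₂ : ℝ)⌋ : ℝ)))
        = (∑ j' ∈ Finset.univ.erase m, (b j' : ℝ) * ξ (j' : ℕ)) * (x : ℝ)
          - ∑ j' ∈ Finset.univ.erase m,
            (b j' : ℝ) * ((⌊ξ (j' : ℕ) * (w₁ : ℝ)⌋ : ℝ) - (⌊ξ (j' : ℕ) * (w₂ : ℝ)⌋ : ℝ)) := by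
      rw [Finset.sum_mul, ← Finset.sum_sub_distrib]
      apply Finset.sum_congr rfl
      intro j' _
      ring
    rw [hexp]
    have : (s : ℝ) = -((b m : ℝ) * (y m : ℝ)) := by rw [hymR]; ring
    rw [hsR] at this
    linarith [this]
  intro j
  by_cases hjm : j = m
  · rw [hjm]
    have h1 : |ξ (m : ℕ) * (x : ℝ) - (y m : ℝ)|
        = |(x : ℝ) * L - ∑ j' ∈ Finset.univ.erase m,
            (b j' : ℝ) * (ξ (j' : ℕ) * (x : ℝ) - (y j' : ℝ))| / |(b m : ℝ)| := by
      rw [← hkey, abs_mul]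
      field_simp
    rw [h1]
    have hbd : |(x : ℝ) * L - ∑ j' ∈ Finset.univ.erase m,
        (b j' : ℝ) * (ξ (j' : ℕ) * (x : ℝ) - (y j' : ℝ))|
        ≤ (x : ℝ) * |L| + ((k : ℝ) - 1) * (|(b m : ℝ)| / Q) := by
      have hxpos : (0 : ℝ) ≤ (x : ℝ) := by exact_mod_cast le_trans zero_le_one hx1
      have t1 : |(x : ℝ) * L| = (x : ℝ) * |L| := by
        rw [abs_mul, abs_of_nonneg hxpos]
      have t2 : |∑ j' ∈ Finset.univ.erase m,
          (b j' : ℝ) * (ξ (j' : ℕ) * (x : ℝ) - (y j' : ℝ))|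
          ≤ ((k : ℝ) - 1) * (|(b m : ℝ)| / Q) := by
        calc |∑ j' ∈ Finset.univ.erase m,
            (b j' : ℝ) * (ξ (j' : ℕ) * (x : ℝ) - (y j' : ℝ))|
            ≤ ∑ j' ∈ Finset.univ.erase m,
              |(b j' : ℝ) * (ξ (j' : ℕ) * (x : ℝ) - (y j' : ℝ))| :=
              Finset.abs_sum_le_sum_abs _ _
          _ ≤ ∑ _j' ∈ Finset.univ.erase m, (|(b m : ℝ)| / Q) := by
              apply Finset.sum_le_sum
              intro j' hj'
              rw [abs_mul]
              have e1 : |(b j' : ℝ)| ≤ |(b m : ℝ)| := by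
                have := hm j'
                calc |(b j' : ℝ)| = ((|b j'| : ℤ) : ℝ) := by push_cast; rfl
                  _ ≤ ((|b m| : ℤ) : ℝ) := by exact_mod_cast this
                  _ = |(b m : ℝ)| := by push_cast; rfl
              have e2 := herr j' (Finset.ne_of_mem_erase hj')
              calc |(b j' : ℝ)| * |ξ (j' : ℕ) * (x : ℝ) - (y j' : ℝ)|
                  ≤ |(b m : ℝ)| * (1 / Q) := by
                    apply mul_le_mul e1 e2 (abs_nonneg _) (abs_nonneg _)
                _ = |(b m : ℝ)| / Q := by ring
          _ = ((k : ℝ) - 1) * (|(b m : ℝ)| / Q) := by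
              rw [Finset.sum_const, Finset.card_erase_of_mem (Finset.mem_univ m)]
              rw [Finset.card_univ, Fintype.card_fin]
              have : ((k - 1 : ℕ) : ℝ) = (k : ℝ) - 1 := by
                have : 1 ≤ k := hk
                push_cast [Nat.cast_sub this]
                ring
              rw [nsmul_eq_mul, this]
      calc |(x : ℝ) * L - ∑ j' ∈ Finset.univ.erase m,
          (b j' : ℝ) * (ξ (j' : ℕ) * (x : ℝ) - (y j' : ℝ))|
          ≤ |(x : ℝ) * L| + |∑ j' ∈ Finset.univ.erase m,
            (b j' : ℝ) * (ξ (j' : ℕ) * (x : ℝ) - (y j' : ℝ))| := abs_sub _ _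
        _ ≤ (x : ℝ) * |L| + ((k : ℝ) - 1) * (|(b m : ℝ)| / Q) := by
            apply add_le_add (le_of_eq t1) t2
    rw [div_le_iff₀ hbmR]
    have hxb : (x : ℝ) ≤ (Q : ℝ) ^ (k - 1) * |(b m : ℝ)| := by
      have : ((x : ℤ) : ℝ) ≤ (((Q : ℤ) ^ (k - 1) * |b m| : ℤ) : ℝ) := by
        exact_mod_cast hxM
      push_cast at this
      exact this
    have hk1 : (1 : ℝ) ≤ (k : ℝ) := by exact_mod_cast hk
    calc |(x : ℝ) * L - ∑ j' ∈ Finset.univ.erase m,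
        (b j' : ℝ) * (ξ (j' : ℕ) * (x : ℝ) - (y j' : ℝ))|
        ≤ (x : ℝ) * |L| + ((k : ℝ) - 1) * (|(b m : ℝ)| / Q) := hbd
      _ ≤ ((Q : ℝ) ^ (k - 1) * |(b m : ℝ)|) * |L|
          + (k : ℝ) / Q * |(b m : ℝ)| := by
          have e1 : (x : ℝ) * |L| ≤ ((Q : ℝ) ^ (k - 1) * |(b m : ℝ)|) * |L| :=
            mul_le_mul_of_nonneg_right hxb (abs_nonneg _)
          have e2 : ((k : ℝ) - 1) * (|(b m : ℝ)| / Q) ≤ (k : ℝ) / Q * |(b m : ℝ)| := by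
            have e3 : ((k : ℝ) - 1) * |(b m : ℝ)| ≤ (k : ℝ) * |(b m : ℝ)| := by
              nlinarith [abs_nonneg ((b m : ℝ))]
            calc ((k : ℝ) - 1) * (|(b m : ℝ)| / Q)
                = (((k : ℝ) - 1) * |(b m : ℝ)|) / Q := by ring
              _ ≤ ((k : ℝ) * |(b m : ℝ)|) / Q := (div_le_div_iff_of_pos_right hQpos).2 e3
              _ = (k : ℝ) / Q * |(b m : ℝ)| := by ring
          linarith
      _ = ((Q : ℝ) ^ (k - 1) * |L| + (k : ℝ) / Q) * |(b m : ℝ)| := by ring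
  · have := herr j hjm
    have h2 : (1 : ℝ) / Q ≤ ((Q : ℝ) ^ (k - 1)) * |L| + (k : ℝ) / Q := by
      have hk1 : (1 : ℝ) ≤ (k : ℝ) := by exact_mod_cast hk
      have : (1 : ℝ) / Q ≤ (k : ℝ) / Q := (div_le_div_iff_of_pos_right hQpos).2 hk1
      nlinarith [abs_nonneg L, pow_nonneg (le_of_lt hQpos) (k - 1)]
    exact le_trans this h2

lemma good_mono (N : ℕ) (ζ : Fin N → ℝ) {l₁ l₂ X : ℝ} (h : l₂ ≤ l₁) (hX : 1 ≤ X)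
    (hg : goodSimulVec N ζ l₁ X) : goodSimulVec N ζ l₂ X := by
  obtain ⟨x, y, h1, h2, h3⟩ := hg
  exact ⟨x, y, h1, h2, fun j => le_trans (h3 j)
    (Real.rpow_le_rpow_of_exponent_le hX (by linarith))⟩

lemma lambda_dense (N : ℕ) (ζ : Fin N → ℝ) (l : ℝ)
    (hl : lambdaVec N ζ = (l : EReal)) (l' : ℝ) (hl' : l' < l) :
    ∀ X₀ : ℝ, ∃ X ≥ X₀, goodSimulVec N ζ l' X := by
  by_contra hc
  push_neg at hc
  obtain ⟨X₀, hX₀⟩ := hc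
  have hub : lambdaVec N ζ ≤ ((l' : EReal)) := by
    apply sSup_le
    rintro e ⟨l'', rfl, hprop⟩
    by_cases hcase : l'' ≤ l'
    · exact_mod_cast hcase
    · exfalso
      obtain ⟨X, hX, hgood⟩ := hprop (max X₀ 1)
      have h1 : (1 : ℝ) ≤ X := le_trans (le_max_right _ _) hX
      have h2 : X₀ ≤ X := le_trans (le_max_left _ _) hX
      exact hX₀ X h2 (good_mono N ζ (le_of_lt (not_le.1 hcase)) h1 hgood)
  rw [hl] at hub
  exact absurd (lt_of_le_of_lt hub (by exact_mod_cast hl')) (lt_irrefl _)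

lemma le_lambda_of_dense (N : ℕ) (ζ : Fin N → ℝ) (T : ℝ)
    (h : ∀ t : ℝ, t < T → ∀ X₀ : ℝ, ∃ X ≥ X₀, goodSimulVec N ζ t X) :
    ((T : EReal)) ≤ lambdaVec N ζ := by
  by_contra hc
  push_neg at hc
  obtain ⟨t, h1, h2⟩ := EReal.lt_iff_exists_real_btwn.1 hc
  have ht : t < T := by exact_mod_cast h2
  unfold lambdaVec at h1
  have hmem : ((t : EReal)) ∈ {e : EReal | ∃ l : ℝ, e = (l : EReal) ∧
      ∀ X₀ : ℝ, ∃ X ≥ X₀, goodSimulVec N ζ l X} := ⟨t, rfl, h t ht⟩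
  exact absurd (le_sSup hmem) (not_le.2 h1)

set_option maxHeartbeats 1000000 in
private lemma main_exists (n k : ℕ) (hn : 1 ≤ n) (hnk : n ≤ k) (ξ : ℕ → ℝ)
    (hli : LinearIndependent ℚ
      (Fin.cons 1 (fun j : Fin k => ξ (j : ℕ)) : Fin (k + 1) → ℝ))
    (l : ℝ) (hl : lambdaVec n (fun j : Fin n => ξ (j : ℕ)) = (l : EReal))
    (hbig : ((k : ℝ) - n + 1) / n < l)
    (τ : ℝ) (hτ0 : 0 < τ)
    (hτ : τ * (((k : ℝ) - 1) * ((n : ℝ) * l + n - 1) + k) < (n : ℝ) * l + n - 1)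
    (Z₀ : ℝ) (hZ₀ : 1 ≤ Z₀) :
    ∃ X ≥ Z₀, goodSimulVec k (fun j : Fin k => ξ (j : ℕ)) τ X := by
  have hk : 1 ≤ k := le_trans hn hnk
  have hnR : (1 : ℝ) ≤ (n : ℝ) := by exact_mod_cast hn
  have hkR : (1 : ℝ) ≤ (k : ℝ) := by exact_mod_cast hk
  have hnkR : (n : ℝ) ≤ (k : ℝ) := by exact_mod_cast hnk
  have hn0 : (0 : ℝ) < (n : ℝ) := by linarith
  have hl0 : 0 < l := lt_trans (div_pos (by linarith) hn0) hbig
  set w : ℝ := (n : ℝ) * l + n - 1 with hw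
  have hwk : (k : ℝ) < w := by
    rw [div_lt_iff₀ hn0] at hbig
    rw [hw]; nlinarith
  have hw0 : 0 < w := by linarith
  have hτk1 : τ * ((k : ℝ) - 1) < 1 := by nlinarith
  have hden : (0 : ℝ) < 1 - τ * ((k : ℝ) - 1) := by linarith
  -- choose w'
  set w'₀ : ℝ := τ * k / (1 - τ * ((k : ℝ) - 1)) with hw'₀def
  have hw'₀w : w'₀ < w := by
    rw [hw'₀def, div_lt_iff₀ hden]
    nlinarith
  set w' : ℝ := (max (k : ℝ) w'₀ + w) / 2 with hw'def
  have hmaxw : max (k : ℝ) w'₀ < w := max_lt hwk hw'₀w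
  have hw'w : w' < w := by rw [hw'def]; linarith [le_max_left (k : ℝ) w'₀]
  have hkw' : (k : ℝ) < w' := by
    have h1 : (k : ℝ) ≤ max (k : ℝ) w'₀ := le_max_left _ _
    rw [hw'def]; linarith
  have hw'0 : 0 < w' := by linarith
  have hw'₀w' : w'₀ < w' := by
    have h1 : w'₀ ≤ max (k : ℝ) w'₀ := le_max_right _ _
    rw [hw'def]; linarith
  have hτw' : τ * k < w' * (1 - τ * ((k : ℝ) - 1)) := by
    rw [hw'₀def, div_lt_iff₀ hden] at hw'₀w'
    nlinarith
  set α : ℝ := (1 - τ * ((k : ℝ) - 1)) / k with hαdef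
  have hα0 : 0 < α := by positivity
  set β : ℝ := α * w' - τ with hβdef
  have hβ0 : 0 < β := by
    rw [hβdef, hαdef, sub_pos, div_mul_eq_mul_div, lt_div_iff₀ (by linarith : (0:ℝ) < (k:ℝ))]
    nlinarith [hτw']
  -- choose l'
  set γ : ℝ := (w' + 1 - n) / n with hγdef
  have hγ0 : 0 < γ := by
    rw [hγdef]
    apply div_pos _ hn0
    linarith
  set l' : ℝ := (γ + l) / 2 with hl'def
  have hγl : γ < l := by
    rw [hγdef, div_lt_iff₀ hn0]
    rw [hw] at hw'w
    linarith
  have hl'l : l' < l := by rw [hl'def]; linarith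
  have hγl' : γ < l' := by rw [hl'def]; linarith
  have hl'0 : 0 < l' := by rw [hl'def]; linarith
  -- constants
  set Cξ : ℝ := ∑ j : Fin k, |ξ (j : ℕ)| with hCξdef
  have hCξ0 : 0 ≤ Cξ := Finset.sum_nonneg fun j _ => abs_nonneg _
  set C₇ : ℝ := 2 ^ (k - 1) + k with hC₇def
  have hC₇0 : 0 < C₇ := by rw [hC₇def]; positivity
  set κ : ℝ := (((k - 1 : ℕ)) : ℝ) * τ with hκdef
  have hκ0 : 0 ≤ κ := by rw [hκdef]; positivity
  have hκτ : κ = ((k : ℝ) - 1) * τ := by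
    rw [hκdef]
    congr 1
    push_cast [Nat.cast_sub hk]
    ring
  set C₈ : ℝ := C₇ * 2 ^ κ with hC₈def
  have hC₈0 : 0 < C₈ := by rw [hC₈def]; positivity
  set B₂ : ℝ := max (max Z₀ 1) (C₈ ^ (1 / β)) with hB₂def
  have hB₂1 : 1 ≤ B₂ := le_trans (le_max_right Z₀ 1) (le_max_left _ _)
  have hB₂Z : Z₀ ≤ B₂ := le_trans (le_max_left Z₀ 1) (le_max_left _ _)
  obtain ⟨δ, hδ0, hδ⟩ := exists_pos_lb k ξ hli (1 + Cξ * B₂) B₂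
  set C₆ : ℝ := 4 * n * (2 : ℝ) ^ w' with hC₆def
  have hC₆0 : 0 < C₆ := by rw [hC₆def]; positivity
  set Y₀ : ℝ := max (max 1 (C₆ ^ (1 / (l' - γ)))) ((4 * n / δ) ^ (1 / l')) with hY₀def
  -- get a good simultaneous approximation for the n-subsystem
  obtain ⟨Y, hYY₀, xx, yy, hx1, hxY, herr⟩ :=
    lambda_dense n (fun j : Fin n => ξ (j : ℕ)) l hl l' hl'l Y₀
  have hY1 : (1 : ℝ) ≤ Y := le_trans (le_trans (le_max_left _ _) (le_max_left _ _)) hYY₀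
  have hY0 : (0 : ℝ) < Y := by linarith
  set xR : ℝ := |((xx : ℤ) : ℝ)| with hxRdef
  have hxR1 : (1 : ℝ) ≤ xR := by rw [hxRdef]; exact_mod_cast hx1
  have hxR0 : (0 : ℝ) < xR := by linarith
  -- step A
  obtain ⟨H, a, b, hbne, hbabs, hH1, hHle, hdbound⟩ :=
    stepA n k hn hnk ξ xx hx1 yy (Y ^ (-l')) herr
  rw [← hxRdef] at hHle hdbound
  set L : ℝ := (a : ℝ) + ∑ j : Fin k, (b j : ℝ) * ξ (j : ℕ) with hLdef
  set d : ℝ := |L| with hddef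
  have hd0 : 0 < d := abs_pos.2 (lin_nonzero k ξ hli a b hbne)
  -- max coordinate
  have hk0 : 0 < k := hk
  obtain ⟨m, -, hm⟩ := Finset.exists_max_image Finset.univ (fun j : Fin k => |b j|)
    ⟨⟨0, hk0⟩, Finset.mem_univ _⟩
  have hm' : ∀ j, |b j| ≤ |b m| := fun j => hm j (Finset.mem_univ _)
  have hbm0 : b m ≠ 0 := by
    obtain ⟨j₀, hj₀⟩ := Function.ne_iff.1 hbne
    intro h0
    have h1 := hm' j₀
    rw [h0] at h1
    simp at h1
    exact hj₀ (by simpa using h1)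
  set Ur : ℝ := ((|b m| : ℤ) : ℝ) with hUrdef
  have hUr1 : (1 : ℝ) ≤ Ur := by
    rw [hUrdef]
    have h1 : (1 : ℤ) ≤ |b m| := Int.one_le_abs (by simpa using hbm0)
    exact_mod_cast h1
  have hUr0 : (0 : ℝ) < Ur := by linarith
  have hUrH : Ur ≤ (H : ℝ) := by
    rw [hUrdef]
    exact_mod_cast hbabs m
  have hbR : ∀ j, |(b j : ℝ)| ≤ Ur := by
    intro j
    rw [hUrdef]
    have := hm' j
    calc |(b j : ℝ)| = ((|b j| : ℤ) : ℝ) := by push_cast; rfl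
      _ ≤ ((|b m| : ℤ) : ℝ) := by exact_mod_cast this
  -- basic bound on d
  have hdle : d ≤ 2 * n * (xR ^ (γ : ℝ)) * (xR ^ (-(w' / n))) * Y ^ (-l') := by
    have h1 : d * xR ≤ (n : ℝ) * H * Y ^ (-l') := hdbound
    have h2 : d ≤ (n : ℝ) * H * Y ^ (-l') / xR := by
      rw [le_div_iff₀ hxR0]; linarith
    have h3 : (n : ℝ) * H * Y ^ (-l') / xR ≤ (n : ℝ) * (2 * xR ^ (n : ℝ)⁻¹) * Y ^ (-l') / xR := by
      apply (div_le_div_iff_of_pos_right hxR0).2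
      exact mul_le_mul_of_nonneg_right (mul_le_mul_of_nonneg_left hHle (le_of_lt hn0))
        (Real.rpow_nonneg (le_of_lt hY0) _)
    have h4 : (n : ℝ) * (2 * xR ^ (n : ℝ)⁻¹) * Y ^ (-l') / xR
        = 2 * n * (xR ^ ((n : ℝ)⁻¹ - 1)) * Y ^ (-l') := by
      rw [Real.rpow_sub hxR0, Real.rpow_one]
      ring
    have h5 : (n : ℝ)⁻¹ - 1 = γ - w' / n := by
      rw [hγdef]
      field_simp
      ring
    rw [h5, Real.rpow_sub hxR0] at h4
    calc d ≤ (n : ℝ) * H * Y ^ (-l') / xR := h2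
      _ ≤ (n : ℝ) * (2 * xR ^ (n : ℝ)⁻¹) * Y ^ (-l') / xR := h3
      _ = xR ^ γ / xR ^ (w' / n) * Y ^ (-l') * (2 * n) := by rw [h4]; ring
      _ = 2 * n * (xR ^ (γ : ℝ)) * (xR ^ (-(w' / n))) * Y ^ (-l') := by
          rw [Real.rpow_neg (le_of_lt hxR0)]
          ring
  -- (F1) and smallness facts
  have hxRY : xR ≤ Y := by rw [hxRdef]; exact hxY
  have hγw : γ - w' / n = (n : ℝ)⁻¹ - 1 := by rw [hγdef]; field_simp; ring
  have hYC₆ : C₆ ≤ Y ^ (l' - γ) := by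
    have h1 : C₆ ^ (1 / (l' - γ)) ≤ Y :=
      le_trans (le_trans (le_max_right _ _) (le_max_left _ _)) hYY₀
    have h2 : (C₆ ^ (1 / (l' - γ))) ^ (l' - γ) = C₆ := by
      rw [← Real.rpow_mul (le_of_lt hC₆0), one_div,
        inv_mul_cancel₀ (ne_of_gt (sub_pos.2 hγl')), Real.rpow_one]
    calc C₆ = (C₆ ^ (1 / (l' - γ))) ^ (l' - γ) := h2.symm
      _ ≤ Y ^ (l' - γ) := Real.rpow_le_rpow (Real.rpow_nonneg (le_of_lt hC₆0) _) h1
          (le_of_lt (sub_pos.2 hγl'))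
  have hxRγ : xR ^ γ ≤ Y ^ γ := Real.rpow_le_rpow (le_of_lt hxR0) hxRY (le_of_lt hγ0)
  have key1 : xR ^ γ * Y ^ (-l') ≤ 1 / C₆ := by
    have hYl'pos : 0 < Y ^ l' := Real.rpow_pos_of_pos hY0 _
    have e1 : Y ^ l' = Y ^ γ * Y ^ (l' - γ) := by
      rw [← Real.rpow_add hY0]; ring_nf
    have h2 : xR ^ γ * C₆ ≤ Y ^ l' := by
      rw [e1]
      exact mul_le_mul hxRγ hYC₆ (le_of_lt hC₆0) (Real.rpow_nonneg (le_of_lt hY0) _)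
    rw [Real.rpow_neg (le_of_lt hY0), ← div_eq_mul_inv,
      div_le_div_iff₀ hYl'pos hC₆0]
    linarith
  have hd_half : d ≤ (1 / 2) * Ur ^ (-w') := by
    have h6 : d ≤ 2 * n * (1 / C₆) * xR ^ (-(w' / n)) := by
      calc d ≤ 2 * n * (xR ^ (γ : ℝ)) * (xR ^ (-(w' / n))) * Y ^ (-l') := hdle
        _ = 2 * n * (xR ^ γ * Y ^ (-l')) * xR ^ (-(w' / n)) := by ring
        _ ≤ 2 * n * (1 / C₆) * xR ^ (-(w' / n)) := by
            apply mul_le_mul_of_nonneg_right _ (Real.rpow_nonneg (le_of_lt hxR0) _)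
            apply mul_le_mul_of_nonneg_left key1 (by positivity)
    have e2 : 2 * (n : ℝ) * (1 / C₆) = (1 / 2) * (2 : ℝ) ^ (-w') := by
      rw [hC₆def, Real.rpow_neg (by norm_num : (0:ℝ) ≤ 2)]
      have h2w : (0:ℝ) < (2:ℝ) ^ w' := Real.rpow_pos_of_pos (by norm_num) _
      field_simp
      ring
    have e3 : (2 : ℝ) ^ (-w') * xR ^ (-(w' / n)) = (2 * xR ^ (n : ℝ)⁻¹) ^ (-w') := by
      rw [Real.mul_rpow (by norm_num : (0:ℝ) ≤ 2) (Real.rpow_nonneg (le_of_lt hxR0) _)]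
      congr 1
      rw [← Real.rpow_mul (le_of_lt hxR0)]
      congr 1
      field_simp
    have e4 : (2 * xR ^ (n : ℝ)⁻¹) ^ (-w') ≤ Ur ^ (-w') := by
      apply Real.rpow_le_rpow_of_nonpos hUr0 _ (neg_nonpos.2 (le_of_lt hw'0))
      calc Ur ≤ (H : ℝ) := hUrH
        _ ≤ 2 * xR ^ (n : ℝ)⁻¹ := hHle
    calc d ≤ 2 * n * (1 / C₆) * xR ^ (-(w' / n)) := h6
      _ = (1 / 2) * ((2 : ℝ) ^ (-w') * xR ^ (-(w' / n))) := by rw [e2]; ring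
      _ = (1 / 2) * (2 * xR ^ (n : ℝ)⁻¹) ^ (-w') := by rw [e3]
      _ ≤ (1 / 2) * Ur ^ (-w') := by
          apply mul_le_mul_of_nonneg_left e4 (by norm_num)
  have hUrw1 : Ur ^ (-w') ≤ 1 :=
    Real.rpow_le_one_of_one_le_of_nonpos hUr1 (neg_nonpos.2 (le_of_lt hw'0))
  have hd1 : d ≤ 1 / 2 := by
    calc d ≤ (1 / 2) * Ur ^ (-w') := hd_half
      _ ≤ (1 / 2) * 1 := by
          apply mul_le_mul_of_nonneg_left hUrw1 (by norm_num)
      _ = 1 / 2 := by ring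
  -- d is small: d < δ
  have hdδ : d < δ := by
    have hmono : xR ^ (γ - w' / n) ≤ 1 := by
      rw [hγw]
      apply Real.rpow_le_one_of_one_le_of_nonpos hxR1
      have : (n : ℝ)⁻¹ ≤ 1 := by
        rw [inv_le_one_iff₀]; right; exact hnR
      linarith
    have h7 : d ≤ 2 * n * Y ^ (-l') := by
      calc d ≤ 2 * n * (xR ^ (γ : ℝ)) * (xR ^ (-(w' / n))) * Y ^ (-l') := hdle
        _ = 2 * n * (xR ^ γ * xR ^ (-(w' / n))) * Y ^ (-l') := by ring
        _ = 2 * n * xR ^ (γ - w' / n) * Y ^ (-l') := by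
            rw [← Real.rpow_add hxR0]; ring_nf
        _ ≤ 2 * n * 1 * Y ^ (-l') := by
            apply mul_le_mul_of_nonneg_right _ (Real.rpow_nonneg (le_of_lt hY0) _)
            apply mul_le_mul_of_nonneg_left hmono (by positivity)
        _ = 2 * n * Y ^ (-l') := by ring
    have hYδ : (4 * n / δ : ℝ) ≤ Y ^ l' := by
      have h1 : (4 * n / δ) ^ (1 / l') ≤ Y := le_trans (le_max_right _ _) hYY₀
      have h40 : (0:ℝ) < 4 * n / δ := by positivity
      have h2 : ((4 * n / δ : ℝ) ^ (1 / l')) ^ l' = 4 * n / δ := by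
        rw [← Real.rpow_mul (le_of_lt h40), one_div,
          inv_mul_cancel₀ (ne_of_gt hl'0), Real.rpow_one]
      calc (4 * n / δ : ℝ) = ((4 * n / δ : ℝ) ^ (1 / l')) ^ l' := h2.symm
        _ ≤ Y ^ l' := Real.rpow_le_rpow (Real.rpow_nonneg (le_of_lt h40) _) h1
            (le_of_lt hl'0)
    have hYl'pos : 0 < Y ^ l' := Real.rpow_pos_of_pos hY0 _
    have h8 : Y ^ (-l') ≤ δ / (4 * n) := by
      rw [Real.rpow_neg (le_of_lt hY0)]
      have h9 : (0:ℝ) < 4 * n / δ := by positivity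
      have h10 : δ / (4 * (n:ℝ)) = (4 * (n:ℝ) / δ)⁻¹ := by field_simp
      rw [h10]
      exact inv_anti₀ h9 hYδ
    calc d ≤ 2 * n * Y ^ (-l') := h7
      _ ≤ 2 * n * (δ / (4 * n)) := by
          apply mul_le_mul_of_nonneg_left h8 (by positivity)
      _ = δ / 2 := by field_simp; ring
      _ < δ := by linarith
  -- Ur is large
  have hUrB : B₂ < Ur := by
    by_contra hle
    push_neg at hle
    have hbB : ∀ j, |(b j : ℝ)| ≤ B₂ := fun j => le_trans (hbR j) hle
    have haA : |(a : ℝ)| ≤ 1 + Cξ * B₂ := by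
      have h1 : (a : ℝ) = L - ∑ j : Fin k, (b j : ℝ) * ξ (j : ℕ) := by
        rw [hLdef]; ring
      have h2 : |∑ j : Fin k, (b j : ℝ) * ξ (j : ℕ)| ≤ Ur * Cξ := by
        calc |∑ j : Fin k, (b j : ℝ) * ξ (j : ℕ)|
            ≤ ∑ j : Fin k, |(b j : ℝ) * ξ (j : ℕ)| := Finset.abs_sum_le_sum_abs _ _
          _ ≤ ∑ j : Fin k, Ur * |ξ (j : ℕ)| := by
              apply Finset.sum_le_sum
              intro j _
              rw [abs_mul]
              exact mul_le_mul_of_nonneg_right (hbR j) (abs_nonneg _)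
          _ = Ur * Cξ := by rw [hCξdef, Finset.mul_sum]
      calc |(a : ℝ)| = |L - ∑ j : Fin k, (b j : ℝ) * ξ (j : ℕ)| := by rw [← h1]
        _ ≤ |L| + |∑ j : Fin k, (b j : ℝ) * ξ (j : ℕ)| := abs_sub _ _
        _ ≤ d + Ur * Cξ := by
            rw [hddef]
            exact add_le_add (le_refl _) h2
        _ ≤ 1 + Cξ * B₂ := by
            have h4 : Ur * Cξ ≤ Cξ * B₂ := by
              rw [mul_comm Cξ B₂]
              exact mul_le_mul_of_nonneg_right hle hCξ0
            linarith [hd1]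
    have := hδ a b hbne hbB haA
    rw [← hLdef, ← hddef] at this
    linarith
  have hUrZ : Z₀ ≤ Ur := le_trans hB₂Z (le_of_lt hUrB)
  -- choose Q and apply step B
  set e : ℝ := d ^ (k : ℝ)⁻¹ with hedef
  have he0 : 0 < e := Real.rpow_pos_of_pos hd0 _
  have he1 : e < 1 := Real.rpow_lt_one (le_of_lt hd0) (by linarith) (by positivity)
  have hek : e ^ k = d := by
    rw [hedef, ← Real.rpow_natCast (d ^ (k : ℝ)⁻¹) k, ← Real.rpow_mul (le_of_lt hd0),
      inv_mul_cancel₀ (by positivity : (k : ℝ) ≠ 0), Real.rpow_one]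
  set Q : ℕ := ⌈1 / e⌉₊ with hQdef
  have hQ1 : 1 ≤ Q := Nat.one_le_ceil_iff.2 (by positivity)
  have hQR0 : (0 : ℝ) < (Q : ℝ) := by exact_mod_cast hQ1
  have hQle : (Q : ℝ) ≤ 2 / e := by
    have h1 := Nat.ceil_lt_add_one (R := ℝ) (a := 1 / e) (by positivity)
    rw [← hQdef] at h1
    have h2 : (1:ℝ) ≤ 1 / e := by
      rw [le_div_iff₀ he0]; linarith
    have h4 : (2:ℝ) / e = 1 / e + 1 / e := by ring
    linarith
  have hQge : 1 / (Q : ℝ) ≤ e := by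
    have h1 : 1 / e ≤ (Q : ℝ) := Nat.le_ceil _
    rw [div_le_iff₀ hQR0]
    calc (1:ℝ) = e * (1 / e) := by field_simp
      _ ≤ e * Q := by
          apply mul_le_mul_of_nonneg_left h1 (le_of_lt he0)
  obtain ⟨x₂, y₂, hx₂1, hx₂M, herr₂⟩ := stepB k hk ξ a b m hm' hbm0 Q hQ1
  rw [← hLdef, ← hddef] at herr₂
  set X : ℝ := ((Q : ℝ) ^ (k - 1)) * Ur with hXdef
  have hQp1 : (1 : ℝ) ≤ (Q : ℝ) := by exact_mod_cast hQ1
  have hQpow1 : (1 : ℝ) ≤ (Q : ℝ) ^ (k - 1) := one_le_pow₀ hQp1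
  have hX1 : (1 : ℝ) ≤ X := by
    rw [hXdef]
    have h1 := mul_le_mul hQpow1 hUr1 zero_le_one (le_trans zero_le_one hQpow1)
    simpa using h1
  have hX0 : (0 : ℝ) < X := by linarith
  have hXZ : Z₀ ≤ X := by
    rw [hXdef]
    exact le_trans hUrZ (le_mul_of_one_le_left (le_of_lt hUr0) hQpow1)
  have hUrcast : Ur = |((b m : ℤ) : ℝ)| := by rw [hUrdef]; push_cast; rfl
  -- error bound
  have hkα : (1 : ℝ) - κ = (k : ℝ) * α := by
    rw [hκτ, hαdef]
    field_simp
  have hek' : e ^ k = e ^ (k - 1) * e := by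
    conv_lhs => rw [← Nat.succ_pred_eq_of_pos hk0]
    rw [pow_succ]
    rfl
  have hEe : (Q : ℝ) ^ (k - 1) * d + (k : ℝ) / Q ≤ C₇ * e := by
    have p1 : (Q : ℝ) ^ (k - 1) ≤ (2 / e) ^ (k - 1) :=
      pow_le_pow_left₀ (le_of_lt hQR0) hQle _
    have p2 : ((2 : ℝ) / e) ^ (k - 1) * d = 2 ^ (k - 1) * e := by
      rw [div_pow, ← hek, hek']
      have hene : e ^ (k - 1) ≠ 0 := pow_ne_zero _ (ne_of_gt he0)
      field_simp
    have p3 : (k : ℝ) / Q ≤ (k : ℝ) * e := by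
      rw [div_eq_mul_one_div]
      exact mul_le_mul_of_nonneg_left hQge (by positivity)
    have p4 : (Q : ℝ) ^ (k - 1) * d ≤ 2 ^ (k - 1) * e := by
      rw [← p2]
      exact mul_le_mul_of_nonneg_right p1 (le_of_lt hd0)
    rw [hC₇def]
    linarith [p3, p4]
  -- the key smallness product
  set P : ℝ := (2 / e) ^ (k - 1) * Ur with hPdef
  have hPpos : 0 < P := by
    rw [hPdef]; positivity
  have hXP : X ≤ P := by
    rw [hXdef, hPdef]
    exact mul_le_mul_of_nonneg_right
      (pow_le_pow_left₀ (le_of_lt hQR0) hQle _) (le_of_lt hUr0)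
  have hC₈Ur : C₈ ≤ Ur ^ β := by
    have r1 : C₈ ^ (1 / β) ≤ Ur :=
      le_trans (le_max_right (max Z₀ 1) _) (le_of_lt hUrB)
    have r2 : (C₈ ^ (1 / β)) ^ β = C₈ := by
      rw [← Real.rpow_mul (le_of_lt hC₈0), one_div,
        inv_mul_cancel₀ (ne_of_gt hβ0), Real.rpow_one]
    calc C₈ = (C₈ ^ (1 / β)) ^ β := r2.symm
      _ ≤ Ur ^ β := Real.rpow_le_rpow (Real.rpow_nonneg (le_of_lt hC₈0) _) r1
          (le_of_lt hβ0)
  have hdUr : d ≤ Ur ^ (-w') := by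
    have h0 : (0:ℝ) ≤ Ur ^ (-w') := Real.rpow_nonneg (le_of_lt hUr0) _
    calc d ≤ (1 / 2) * Ur ^ (-w') := hd_half
      _ ≤ Ur ^ (-w') := by linarith
  have hdα : d ^ α ≤ Ur ^ (-(w' * α)) := by
    have h1 : d ^ α ≤ (Ur ^ (-w')) ^ α :=
      Real.rpow_le_rpow (le_of_lt hd0) hdUr (le_of_lt hα0)
    rw [← Real.rpow_mul (le_of_lt hUr0)] at h1
    calc d ^ α ≤ Ur ^ (-w' * α) := h1
      _ = Ur ^ (-(w' * α)) := by ring_nf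
  have hPτkey : C₇ * e * P ^ τ ≤ 1 := by
    have q0 : P ^ τ = ((2 / e) ^ (k - 1)) ^ (τ : ℝ) * Ur ^ τ := by
      rw [hPdef, Real.mul_rpow (by positivity) (le_of_lt hUr0)]
    have q1 : (((2 : ℝ) / e) ^ (k - 1)) ^ (τ : ℝ) = (2 / e) ^ κ := by
      rw [← Real.rpow_natCast (2 / e) (k - 1), ← Real.rpow_mul (by positivity), ← hκdef]
    have q2 : ((2 : ℝ) / e) ^ κ = 2 ^ κ * (e ^ κ)⁻¹ := by
      rw [Real.div_rpow (by norm_num) (le_of_lt he0), div_eq_mul_inv]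
    have q3 : e * (e ^ κ)⁻¹ = d ^ α := by
      have e1 : e * (e ^ κ)⁻¹ = e ^ ((1 : ℝ) - κ) := by
        rw [Real.rpow_sub he0, Real.rpow_one, div_eq_mul_inv]
      rw [e1, hkα, hedef, ← Real.rpow_mul (le_of_lt hd0)]
      congr 1
      field_simp
    calc C₇ * e * P ^ τ = C₇ * 2 ^ κ * (e * (e ^ κ)⁻¹) * Ur ^ τ := by
          rw [q0, q1, q2]; ring
      _ = C₈ * (d ^ α * Ur ^ τ) := by rw [q3, hC₈def]; ring
      _ ≤ C₈ * (Ur ^ (-(w' * α)) * Ur ^ τ) := by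
          apply mul_le_mul_of_nonneg_left _ (le_of_lt hC₈0)
          exact mul_le_mul_of_nonneg_right hdα (Real.rpow_nonneg (le_of_lt hUr0) _)
      _ = C₈ * Ur ^ (-β) := by
          rw [← Real.rpow_add hUr0]
          congr 1
          rw [hβdef]
          ring
      _ = C₈ / Ur ^ β := by
          rw [Real.rpow_neg (le_of_lt hUr0), div_eq_mul_inv]
      _ ≤ 1 := by
          rw [div_le_one (Real.rpow_pos_of_pos hUr0 _)]
          exact hC₈Ur
  have hfinal : (Q : ℝ) ^ (k - 1) * d + (k : ℝ) / Q ≤ X ^ (-τ) := by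
    have hPτpos : (0 : ℝ) < P ^ τ := Real.rpow_pos_of_pos hPpos _
    have hPXτ : P ^ (-τ) ≤ X ^ (-τ) :=
      Real.rpow_le_rpow_of_nonpos hX0 hXP (neg_nonpos.2 (le_of_lt hτ0))
    have hCP : C₇ * e ≤ P ^ (-τ) := by
      rw [Real.rpow_neg (le_of_lt hPpos)]
      have h1 : C₇ * e ≤ 1 / P ^ τ := (le_div_iff₀ hPτpos).2 hPτkey
      simpa [one_div] using h1
    exact le_trans hEe (le_trans hCP hPXτ)
  refine ⟨X, hXZ, x₂, y₂, ?_, ?_, ?_⟩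
  · rw [abs_of_pos (lt_of_lt_of_le zero_lt_one hx₂1)]
    exact hx₂1
  · have h1 : ((x₂ : ℤ) : ℝ) ≤ ((((Q : ℤ) ^ (k - 1) * |b m|) : ℤ) : ℝ) := by
      exact_mod_cast hx₂M
    push_cast at h1
    have h2 : (0 : ℝ) < ((x₂ : ℤ) : ℝ) := by exact_mod_cast lt_of_lt_of_le zero_lt_one hx₂1
    rw [abs_of_pos h2, hXdef, hUrcast]
    exact h1
  · intro j
    exact le_trans (herr₂ j) hfinal

theorem stmt_15 (n k : ℕ) (hn : 1 ≤ n) (hnk : n ≤ k) (ξ : ℕ → ℝ)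
    (hli : LinearIndependent ℚ
      (Fin.cons 1 (fun j : Fin k => ξ (j : ℕ)) : Fin (k + 1) → ℝ))
    (l : ℝ) (hl : lambdaVec n (fun j : Fin n => ξ (j : ℕ)) = (l : EReal))
    (hbig : ((k : ℝ) - n + 1) / n < l) :
    ((((n : ℝ) * l + n - 1) / ((n : ℝ) * (k - 1) * (l + 1) + 1) : ℝ) : EReal) ≤
        lambdaVec k (fun j : Fin k => ξ (j : ℕ)) ∧
      (1 : ℝ) / k < ((n : ℝ) * l + n - 1) / ((n : ℝ) * (k - 1) * (l + 1) + 1) := by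
  have hk : 1 ≤ k := le_trans hn hnk
  have hnR : (1 : ℝ) ≤ (n : ℝ) := by exact_mod_cast hn
  have hkR : (1 : ℝ) ≤ (k : ℝ) := by exact_mod_cast hk
  have hnkR : (n : ℝ) ≤ (k : ℝ) := by exact_mod_cast hnk
  have hn0 : (0 : ℝ) < (n : ℝ) := by linarith
  have hk0 : (0 : ℝ) < (k : ℝ) := by linarith
  have hl0 : 0 < l := lt_trans (div_pos (by linarith) hn0) hbig
  have hw : (k : ℝ) < (n : ℝ) * l + n - 1 := by
    rw [div_lt_iff₀ hn0] at hbig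
    nlinarith
  have hDpos : (0 : ℝ) < (n : ℝ) * (k - 1) * (l + 1) + 1 := by
    have h1 : (0 : ℝ) ≤ (n : ℝ) * (k - 1) * (l + 1) := by
      apply mul_nonneg (mul_nonneg (by linarith) (by linarith)) (by linarith)
    linarith
  have hDeq : (n : ℝ) * (k - 1) * (l + 1) + 1
      = ((k : ℝ) - 1) * ((n : ℝ) * l + n - 1) + k := by ring
  constructor
  · -- main transference bound
    apply le_lambda_of_dense
    intro t ht X₀
    set T : ℝ := ((n : ℝ) * l + n - 1) / ((n : ℝ) * (k - 1) * (l + 1) + 1) with hTdef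
    have hT0 : 0 < T := div_pos (by linarith) hDpos
    set τ : ℝ := max t (T / 2) with hτdef
    have hτ0 : 0 < τ := lt_of_lt_of_le (by linarith) (le_max_right _ _)
    have hτT : τ < T := max_lt ht (by linarith)
    have hτineq : τ * (((k : ℝ) - 1) * ((n : ℝ) * l + n - 1) + k)
        < (n : ℝ) * l + n - 1 := by
      rw [← hDeq]
      rw [hTdef, lt_div_iff₀ hDpos] at hτT
      linarith
    obtain ⟨X, hXZ, hgood⟩ := main_exists n k hn hnk ξ hli l hl hbig τ hτ0 hτineq
      (max X₀ 1) (le_max_right _ _)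
    refine ⟨X, le_trans (le_max_left _ _) hXZ, ?_⟩
    exact good_mono k _ (le_max_left t (T / 2))
      (le_trans (le_max_right X₀ 1) hXZ) hgood
  · -- elementary inequality
    rw [div_lt_div_iff₀ hk0 hDpos]
    rw [div_lt_iff₀ hn0] at hbig
    nlinarith
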